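/- Let k₁,k₂>0, K≥2, J(z)=k₁/z¹²−k₂/z⁶ for z>0 and +∞ for z≤0, J_j(z):=J(jz), γ:=(2k₁/k₂)^{1/6}·((Σ_{j=1}^K j^{-12})/(Σ_{j=1}^K j^{-6}))^{1/6}, and c_j:=−jJ'(jγ)/J'(γ) for j=2,…,K. Then for every j=2,…,K there exist η>0 and C>0 such that for all reals z and z_1,…,z_j with Σ_{s=1}^j z_s=jz, Σ_{s=1}^j |z_s−z|+|z−γ|≤η, one has (in ℝ∪{+∞}): J_j(z)+(c_j/j)·Σ_{s=1}^j J_1(z_s) ≥ J_j(z)+c_j J_1(z)+C·Σ_{s=1}^j (z_s−z)². -/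

import Mathlib

open Filter Finset Set

noncomputable section

/-- The Lennard-Jones potential, extended by `+∞` on `(-∞,0]`. -/
def LJ (k₁ k₂ : ℝ) (z : ℝ) : EReal :=
  if 0 < z then ((k₁ / z ^ 12 - k₂ / z ^ 6 : ℝ) : EReal) else ⊤

/-- The real-valued Lennard-Jones formula (used for derivatives on `(0,∞)`). -/
def LJr (k₁ k₂ : ℝ) (z : ℝ) : ℝ := k₁ / z ^ 12 - k₂ / z ^ 6

/-- The unique minimizer `γ` of the Cauchy–Born energy density `J_CB(z)=Σ_{j=1}^K J(jz)`. -/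
def gammaLJ (k₁ k₂ : ℝ) (K : ℕ) : ℝ :=
  (2 * k₁ / k₂) ^ ((1 : ℝ) / 6) *
    ((∑ j ∈ Finset.Icc 1 K, 1 / (j : ℝ) ^ 12) /
      (∑ j ∈ Finset.Icc 1 K, 1 / (j : ℝ) ^ 6)) ^ ((1 : ℝ) / 6)

/-- The splitting coefficients `c_j := -j·J'(jγ)/J'(γ)`, `j = 2,…,K`. -/
def cLJ (k₁ k₂ : ℝ) (K : ℕ) (j : ℕ) : ℝ :=
  -((j : ℝ) * deriv (LJr k₁ k₂) ((j : ℝ) * gammaLJ k₁ k₂ K)) /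
    deriv (LJr k₁ k₂) (gammaLJ k₁ k₂ K)

/-! ### Auxiliary lemmas -/

/-- First derivative of the Lennard-Jones formula. -/
def LJd (k₁ k₂ : ℝ) (z : ℝ) : ℝ := 6*k₂*z^(-7:ℤ) - 12*k₁*z^(-13:ℤ)

/-- Second derivative of the Lennard-Jones formula. -/
def LJdd (k₁ k₂ : ℝ) (z : ℝ) : ℝ := 156*k₁*z^(-14:ℤ) - 42*k₂*z^(-8:ℤ)

lemma LJr_eq (k₁ k₂ : ℝ) : LJr k₁ k₂ = fun z => k₁ * z^(-12:ℤ) - k₂ * z^(-6:ℤ) := by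
  funext z
  rw [zpow_neg, zpow_neg, zpow_ofNat, zpow_ofNat]; simp [LJr, div_eq_mul_inv]

lemma hasDerivAt_LJr {z : ℝ} (k₁ k₂ : ℝ) (hz : z ≠ 0) :
    HasDerivAt (LJr k₁ k₂) (LJd k₁ k₂ z) z := by
  rw [LJr_eq]
  have h1 : HasDerivAt (fun z:ℝ => z^(-12:ℤ)) (((-12:ℤ):ℝ) * z^(-13:ℤ)) z := by
    simpa using hasDerivAt_zpow (-12) z (Or.inl hz)
  have h2 : HasDerivAt (fun z:ℝ => z^(-6:ℤ)) (((-6:ℤ):ℝ) * z^(-7:ℤ)) z := by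
    simpa using hasDerivAt_zpow (-6) z (Or.inl hz)
  have := (h1.const_mul k₁).sub (h2.const_mul k₂)
  refine this.congr_deriv ?_
  unfold LJd; push_cast; ring

lemma hasDerivAt_LJd {z : ℝ} (k₁ k₂ : ℝ) (hz : z ≠ 0) :
    HasDerivAt (LJd k₁ k₂) (LJdd k₁ k₂ z) z := by
  have h1 : HasDerivAt (fun z:ℝ => z^(-7:ℤ)) (((-7:ℤ):ℝ) * z^(-8:ℤ)) z := by
    simpa using hasDerivAt_zpow (-7) z (Or.inl hz)
  have h2 : HasDerivAt (fun z:ℝ => z^(-13:ℤ)) (((-13:ℤ):ℝ) * z^(-14:ℤ)) z := by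
    simpa using hasDerivAt_zpow (-13) z (Or.inl hz)
  have := (h1.const_mul (6*k₂)).sub (h2.const_mul (12*k₁))
  refine this.congr_deriv ?_
  unfold LJdd; push_cast; ring

lemma LJd_eq {z : ℝ} (k₁ k₂ : ℝ) (hz : z ≠ 0) :
    LJd k₁ k₂ z = (6*k₂*z^6 - 12*k₁) / z^13 := by
  unfold LJd
  rw [zpow_neg, zpow_neg, zpow_ofNat, zpow_ofNat]
  field_simp

lemma LJdd_eq {z : ℝ} (k₁ k₂ : ℝ) (hz : z ≠ 0) :
    LJdd k₁ k₂ z = (156*k₁ - 42*k₂*z^6) / z^14 := by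
  unfold LJdd
  rw [zpow_neg, zpow_neg, zpow_ofNat, zpow_ofNat]
  field_simp

lemma sum_six_le (K : ℕ) (hK : 1 ≤ K) :
    ∑ i ∈ Finset.Icc 1 K, 1/(i:ℝ)^6 ≤ 2 - 1/(K:ℝ) := by
  induction K, hK using Nat.le_induction with
  | base => norm_num
  | succ n hn ih =>
    rw [Finset.sum_Icc_succ_top (by omega : 1 ≤ n+1)]
    have hn' : (1:ℝ) ≤ n := by exact_mod_cast hn
    have hpos : (0:ℝ) < n := by linarith
    have h1 : (1:ℝ)/((n:ℝ)+1)^6 ≤ 1/(n:ℝ) - 1/((n:ℝ)+1) := by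
      have he : (1:ℝ)/(n:ℝ) - 1/((n:ℝ)+1) = 1/((n:ℝ)*((n:ℝ)+1)) := by
        field_simp
        ring
      rw [he]
      apply one_div_le_one_div_of_le (by positivity)
      nlinarith [pow_le_pow_right₀ (by linarith : (1:ℝ) ≤ (n:ℝ)+1) (by norm_num : 2 ≤ 6)]
    push_cast
    linarith

lemma ereal_coe_sum {ι : Type*} (t : Finset ι) (f : ι → ℝ) :
    ((∑ i ∈ t, f i : ℝ) : EReal) = ∑ i ∈ t, ((f i : ℝ) : EReal) := by
  induction t using Finset.cons_induction with
  | empty => simp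
  | cons a t ha ih => rw [Finset.sum_cons, Finset.sum_cons, EReal.coe_add, ih]

lemma rpow_sixth_pow {x : ℝ} (hx : 0 ≤ x) : (x ^ ((1:ℝ)/6))^(6:ℕ) = x := by
  rw [show (1:ℝ)/6 = (((6:ℕ)):ℝ)⁻¹ by norm_num]
  exact Real.rpow_inv_natCast_pow hx (by norm_num)

set_option maxHeartbeats 2000000 in
/-- assumption (vii) for Lennard-Jones potentials: for every `j = 2,…,K`
there exist `η > 0` and `C > 0` such that whenever `Σ z_s = jz` and
`Σ |z_s - z| + |z - γ| ≤ η`, one has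
`J_j(z) + (c_j/j)·Σ J_1(z_s) ≥ J_j(z) + c_j·J_1(z) + C·Σ (z_s - z)²` in `ℝ ∪ {+∞}`. -/
theorem quadratic_lower_bound_near_gamma (k₁ k₂ : ℝ) (hk₁ : 0 < k₁) (hk₂ : 0 < k₂)
    (K : ℕ) (hK : 2 ≤ K) :
    ∀ j ∈ Finset.Icc 2 K, ∃ η > (0 : ℝ), ∃ C > (0 : ℝ),
      ∀ (z : ℝ) (p : Fin j → ℝ), (∑ s, p s) = j * z →
        (∑ s, |p s - z|) + |z - gammaLJ k₁ k₂ K| ≤ η →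
        LJ k₁ k₂ ((j : ℝ) * z) + ((cLJ k₁ k₂ K j : ℝ) : EReal) * LJ k₁ k₂ z +
            ((C * ∑ s, (p s - z) ^ 2 : ℝ) : EReal) ≤
          LJ k₁ k₂ ((j : ℝ) * z) +
            ((cLJ k₁ k₂ K j / j : ℝ) : EReal) * ∑ s, LJ k₁ k₂ (p s) := by
  intro j hj
  obtain ⟨hj2, hjK⟩ := Finset.mem_Icc.mp hj
  have hj2' : (2:ℝ) ≤ (j:ℝ) := by exact_mod_cast hj2
  have hjpos : (0:ℝ) < (j:ℝ) := by linarith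
  set γ := gammaLJ k₁ k₂ K with hγdef
  set S12 := ∑ i ∈ Finset.Icc 1 K, 1/(i:ℝ)^12 with hS12def
  set S6 := ∑ i ∈ Finset.Icc 1 K, 1/(i:ℝ)^6 with hS6def
  -- facts about the sums
  have hS6pos : 0 < S6 := by
    rw [hS6def]
    refine Finset.sum_pos (fun i hi => ?_) ⟨1, Finset.mem_Icc.mpr ⟨le_refl 1, by omega⟩⟩
    have : (0:ℝ) < (i:ℝ) := by
      have h1 := (Finset.mem_Icc.mp hi).1
      exact_mod_cast Nat.lt_of_lt_of_le Nat.zero_lt_one h1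
    positivity
  have hS12ge1 : 1 ≤ S12 := by
    rw [hS12def]
    have h := Finset.single_le_sum (s := Finset.Icc 1 K) (f := fun i : ℕ => 1/(i:ℝ)^12)
      (fun i _ => by positivity)
      (show (1:ℕ) ∈ Finset.Icc 1 K from Finset.mem_Icc.mpr ⟨le_refl 1, by omega⟩)
    simpa [one_div] using h
  have hS12ltS6 : S12 < S6 := by
    rw [hS12def, hS6def]
    apply Finset.sum_lt_sum
    · intro i hi
      have h1i : (1:ℝ) ≤ (i:ℝ) := by
        exact_mod_cast (Finset.mem_Icc.mp hi).1
      apply one_div_le_one_div_of_le (by positivity)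
      exact pow_le_pow_right₀ h1i (by norm_num)
    · exact ⟨2, Finset.mem_Icc.mpr ⟨by omega, hK⟩, by norm_num⟩
  have hS6lt2 : S6 < 2 := by
    have := sum_six_le K (by omega)
    have hKpos : (0:ℝ) < (K:ℝ) := by exact_mod_cast Nat.pos_of_ne_zero (by omega)
    have : (0:ℝ) < 1/(K:ℝ) := by positivity
    rw [hS6def]
    linarith [sum_six_le K (by omega : 1 ≤ K)]
  have hS12pos : (0:ℝ) < S12 := by linarith
  -- facts about γ
  have hA : (0:ℝ) < 2*k₁/k₂ := by positivity
  have hB : (0:ℝ) < S12/S6 := by positivity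
  have hγpos : 0 < γ := by
    rw [hγdef, gammaLJ, ← hS12def, ← hS6def]
    exact mul_pos (Real.rpow_pos_of_pos hA _) (Real.rpow_pos_of_pos hB _)
  have hγne : γ ≠ 0 := ne_of_gt hγpos
  have hγ6 : γ^6 = (2*k₁/k₂) * (S12/S6) := by
    rw [hγdef, gammaLJ, ← hS12def, ← hS6def, mul_pow, rpow_sixth_pow hA.le,
      rpow_sixth_pow hB.le]
  have hγ6lt : k₂ * γ^6 < 2*k₁ := by
    rw [hγ6]
    have h1 : S12/S6 < 1 := (div_lt_one hS6pos).mpr hS12ltS6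
    have h2 : k₂ * (2*k₁/k₂ * (S12/S6)) = 2*k₁*(S12/S6) := by
      field_simp
    rw [h2]
    nlinarith
  -- sign of the derivatives
  have hdγ : deriv (LJr k₁ k₂) γ < 0 := by
    rw [(hasDerivAt_LJr k₁ k₂ hγne).deriv, LJd_eq k₁ k₂ hγne]
    apply div_neg_of_neg_of_pos (by nlinarith) (by positivity)
  have hjγne : (j:ℝ)*γ ≠ 0 := by positivity
  have hdjγ : 0 < deriv (LJr k₁ k₂) ((j:ℝ)*γ) := by
    rw [(hasDerivAt_LJr k₁ k₂ hjγne).deriv, LJd_eq k₁ k₂ hjγne]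
    apply div_pos ?_ (by positivity)
    have hj6 : (64:ℝ) ≤ (j:ℝ)^6 := by
      calc (64:ℝ) = 2^6 := by norm_num
      _ ≤ (j:ℝ)^6 := pow_le_pow_left₀ (by norm_num) hj2' 6
    have ht : 1 < (j:ℝ)^6 * (S12/S6) := by
      rw [mul_div_assoc']
      refine (one_lt_div hS6pos).mpr ?_
      nlinarith
    have h2 : k₂ * ((j:ℝ)*γ)^6 = (j:ℝ)^6 * (k₂ * γ^6) := by ring
    have h3 : k₂ * γ^6 = 2*k₁*(S12/S6) := by
      rw [hγ6]; field_simp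
    nlinarith [mul_lt_mul_of_pos_left ht (by linarith : (0:ℝ) < 2*k₁)]
  have hc : 0 < cLJ k₁ k₂ K j := by
    rw [cLJ, ← hγdef]
    rw [div_pos_iff]
    right
    constructor
    · have : 0 < (j:ℝ) * deriv (LJr k₁ k₂) ((j:ℝ)*γ) := mul_pos hjpos hdjγ
      linarith
    · exact hdγ
  clear_value γ S12 S6
  clear hγdef hS12def hS6def
  -- the interval and the convexity modulus
  obtain ⟨b, hγb, hbpos, hb6⟩ : ∃ b:ℝ, γ < b ∧ 0 < b ∧ b^6 = γ^6 * (13/7) := by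
    refine ⟨γ * (((13:ℝ)/7) ^ ((1:ℝ)/6)), ?_, ?_, ?_⟩
    · have hr1 : 1 < ((13:ℝ)/7) ^ ((1:ℝ)/6) := by
        rw [Real.one_lt_rpow_iff_of_pos (by norm_num)]
        left; constructor <;> norm_num
      nlinarith
    · exact mul_pos hγpos (Real.rpow_pos_of_pos (by norm_num) _)
    · rw [mul_pow, rpow_sixth_pow (by norm_num : (0:ℝ) ≤ (13:ℝ)/7)]
  obtain ⟨m, hm, hmbd⟩ :
      ∃ m:ℝ, 0 < m ∧ ∀ x:ℝ, 0 < x → x ≤ b → m ≤ LJdd k₁ k₂ x := by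
    have hN : 0 < 156*k₁ - 42*k₂*b^6 := by
      rw [hb6]
      have he : 42*k₂*(γ^6*(13/7)) = 78*(k₂*γ^6) := by ring
      linarith [hγ6lt]
    refine ⟨(156*k₁ - 42*k₂*b^6) / b^14, div_pos hN (by positivity), ?_⟩
    intro x hx0 hxb
    rw [LJdd_eq k₁ k₂ (ne_of_gt hx0)]
    have hx6 : x^6 ≤ b^6 := pow_le_pow_left₀ hx0.le hxb 6
    have h1 : 156*k₁ - 42*k₂*b^6 ≤ 156*k₁ - 42*k₂*x^6 := by
      have := mul_le_mul_of_nonneg_left hx6 hk₂.le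
      linarith
    exact div_le_div₀ (by linarith) h1 (by positivity) (pow_le_pow_left₀ hx0.le hxb 14)
  -- choose η and C
  refine ⟨min (γ/4) ((b - γ)/2), lt_min (by linarith) (by linarith),
    cLJ k₁ k₂ K j / j * (m/2),
    mul_pos (div_pos hc hjpos) (by linarith), ?_⟩
  intro z p hsum hclose
  set η := min (γ/4) ((b - γ)/2) with hηdef
  have hηγ : η ≤ γ/4 := min_le_left _ _
  have hηb : η ≤ (b - γ)/2 := min_le_right _ _
  have habs_sum_nonneg : (0:ℝ) ≤ ∑ s, |p s - z| := Finset.sum_nonneg fun s _ => abs_nonneg _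
  have hzγ : |z - γ| ≤ η := by linarith
  have habs : ∀ s, |p s - z| ≤ η := fun s => by
    have h1 := Finset.single_le_sum (f := fun s => |p s - z|)
      (fun i _ => abs_nonneg _) (Finset.mem_univ s)
    have h2 := abs_nonneg (z - γ)
    linarith
  obtain ⟨hz1, hz2⟩ := abs_le.mp hzγ
  have hz_pos : 0 < z := by linarith
  have hz_le : z ≤ b := by linarith
  have hz_mem : z ∈ Set.Ioc (0:ℝ) b := ⟨hz_pos, hz_le⟩
  have hp_mem : ∀ s, p s ∈ Set.Ioc (0:ℝ) b := by
    intro s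
    obtain ⟨h1, h2⟩ := abs_le.mp (habs s)
    exact ⟨by linarith, by linarith⟩
  have hp_pos : ∀ s, 0 < p s := fun s => (hp_mem s).1
  -- convexity of the shifted LJ potential
  set g : ℝ → ℝ := fun y => LJr k₁ k₂ y - m/2 * y^2 with hgdef
  have hgd : ∀ x : ℝ, x ≠ 0 → HasDerivAt g (LJd k₁ k₂ x - m*x) x := by
    intro x hx
    have h1 := hasDerivAt_LJr k₁ k₂ hx
    have h2 := (hasDerivAt_pow 2 x).const_mul (m/2)
    have h3 : m/2*(((2:ℕ):ℝ)*x^(2-1)) = m*x := by push_cast; ring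
    rw [h3] at h2
    exact h1.sub h2
  have hgd2 : ∀ x : ℝ, x ≠ 0 →
      HasDerivAt (fun y => LJd k₁ k₂ y - m*y) (LJdd k₁ k₂ x - m) x := by
    intro x hx
    have h1 := hasDerivAt_LJd k₁ k₂ hx
    have h2 := (hasDerivAt_id x).const_mul m
    rw [mul_one] at h2
    exact h1.sub h2
  have hioo : interior (Set.Ioc (0:ℝ) b) = Set.Ioo 0 b := interior_Ioc
  have hg : ConvexOn ℝ (Set.Ioc (0:ℝ) b) g := by
    apply convexOn_of_hasDerivWithinAt2_nonneg (convex_Ioc 0 b)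
      (f' := fun y => LJd k₁ k₂ y - m*y) (f'' := fun y => LJdd k₁ k₂ y - m)
    · intro x hx
      exact ((hgd x (ne_of_gt hx.1)).continuousAt).continuousWithinAt
    · intro x hx
      rw [hioo] at hx
      exact (hgd x (ne_of_gt hx.1)).hasDerivWithinAt
    · intro x hx
      rw [hioo] at hx
      exact (hgd2 x (ne_of_gt hx.1)).hasDerivWithinAt
    · intro x hx
      rw [hioo] at hx
      obtain ⟨hx0, hxb⟩ := hx
      have hxne : x ≠ 0 := ne_of_gt hx0
      have h2 := hmbd x hx0 hxb.le
      linarith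
  -- Jensen's inequality
  have hw1 : ∑ _s : Fin j, (1:ℝ)/(j:ℝ) = 1 := by
    rw [Finset.sum_const, Finset.card_univ, Fintype.card_fin, nsmul_eq_mul]
    field_simp
  have hmean : ∑ s, ((1:ℝ)/(j:ℝ)) • p s = z := by
    simp only [smul_eq_mul]
    rw [← Finset.mul_sum, hsum]
    field_simp
  have hJ := hg.map_sum_le (fun s _ => by positivity) hw1 (fun s _ => hp_mem s)
  rw [hmean] at hJ
  have hJ' : (j:ℝ) * g z ≤ ∑ s, g (p s) := by
    have h2 : ∑ s, ((1:ℝ)/(j:ℝ)) • g (p s) = (1/(j:ℝ)) * ∑ s, g (p s) := by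
      simp only [smul_eq_mul]
      rw [← Finset.mul_sum]
    rw [h2] at hJ
    have := mul_le_mul_of_nonneg_left hJ hjpos.le
    have heq : (j:ℝ) * ((1/(j:ℝ)) * ∑ s, g (p s)) = ∑ s, g (p s) := by
      field_simp
    rwa [heq] at this
  -- the key quadratic estimate
  have hsq : ∑ s, (p s - z)^2 = (∑ s, (p s)^2) - (j:ℝ)*z^2 := by
    rw [Finset.sum_congr rfl (fun s _ => by ring :
      ∀ s ∈ Finset.univ, (p s - z)^2 = (p s)^2 - 2*z*(p s) + z^2)]
    rw [Finset.sum_add_distrib, Finset.sum_sub_distrib, ← Finset.mul_sum, hsum,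
      Finset.sum_const, Finset.card_univ, Fintype.card_fin, nsmul_eq_mul]
    ring
  have hgsum : ∑ s, g (p s) = (∑ s, LJr k₁ k₂ (p s)) - m/2 * ∑ s, (p s)^2 := by
    simp only [hgdef]
    rw [Finset.sum_sub_distrib, ← Finset.mul_sum]
  have hkey : m/2 * (∑ s, (p s - z)^2)
      ≤ (∑ s, LJr k₁ k₂ (p s)) - (j:ℝ) * LJr k₁ k₂ z := by
    rw [hgsum] at hJ'
    simp only [hgdef] at hJ'
    rw [hsq]
    nlinarith [hJ']
  -- passing to EReal
  have hcoe : ∀ x : ℝ, 0 < x → LJ k₁ k₂ x = ((LJr k₁ k₂ x : ℝ) : EReal) := by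
    intro x hx
    rw [LJ, if_pos hx]
    rfl
  have hsumLJ : (∑ s, LJ k₁ k₂ (p s)) = ((∑ s, LJr k₁ k₂ (p s) : ℝ) : EReal) := by
    rw [ereal_coe_sum]
    exact Finset.sum_congr rfl fun s _ => hcoe _ (hp_pos s)
  rw [hsumLJ, hcoe _ (mul_pos hjpos hz_pos), hcoe _ hz_pos]
  rw [← EReal.coe_mul, ← EReal.coe_mul, ← EReal.coe_add, ← EReal.coe_add, ← EReal.coe_add]
  rw [EReal.coe_le_coe_iff]
  -- the final real inequality
  have hd := div_pos hc hjpos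
  have h3 := mul_le_mul_of_nonneg_left hkey hd.le
  have h5 : (cLJ k₁ k₂ K j / (j:ℝ)) * ((j:ℝ) * LJr k₁ k₂ z)
      = cLJ k₁ k₂ K j * LJr k₁ k₂ z := by
    rw [← mul_assoc, div_mul_cancel₀ _ (ne_of_gt hjpos)]
  nlinarith [h3, h5]
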